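/- If Γ is an invertible complex d×d matrix, Q is a nontrivial orthogonal projector on ℂ^d (Q ≠ 0 and Q ≠ 1), then the product projector 1 ⊗ Q does not commute with vec(Γ)·vec(Γ)ᴴ; symmetrically, for nontrivial P, the projector P ⊗ 1 does not commute with vec(Γ)·vec(Γ)ᴴ. That is, the whole-system property vec(Γ)·vec(Γ)ᴴ is incompatible with every nontrivial property of a single part. -/

import Mathlib

open Matrix
open scoped Kronecker

/-- Vectorization of a matrix: `vec C (i,j) = C i j`. -/
def vec {m n : ℕ} (C : Matrix (Fin m) (Fin n) ℂ) : Fin m × Fin n → ℂ :=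
  fun p => C p.1 p.2

lemma mul_vecMulVec' {n : Type*} [Fintype n] (A : Matrix n n ℂ) (v w : n → ℂ) :
    A * vecMulVec v w = vecMulVec (A *ᵥ v) w := by
  ext i j
  simp [Matrix.mul_apply, vecMulVec_apply, Matrix.mulVec, dotProduct,
    Finset.sum_mul, mul_assoc]

lemma vecMulVec_mul' {n : Type*} [Fintype n] (A : Matrix n n ℂ) (v w : n → ℂ) :
    vecMulVec v w * A = vecMulVec v (w ᵥ* A) := by
  ext i j
  simp [Matrix.mul_apply, vecMulVec_apply, Matrix.vecMul, dotProduct,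
    Finset.mul_sum, mul_assoc]

lemma aux_eigen {n : Type*} [Fintype n] (A : Matrix n n ℂ) (v : n → ℂ)
    (hv : v ≠ 0)
    (h : A * vecMulVec v (star v) = vecMulVec v (star v) * A) :
    ∃ c : ℂ, A *ᵥ v = c • v := by
  rw [mul_vecMulVec', vecMulVec_mul'] at h
  obtain ⟨j, hj⟩ : ∃ j, v j ≠ 0 := by
    by_contra hc
    push_neg at hc
    exact hv (funext hc)
  refine ⟨(star v ᵥ* A) j / star (v j), funext fun i => ?_⟩
  have hij := congrFun (congrFun h i) j
  simp only [vecMulVec_apply, Pi.star_apply] at hij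
  have hsj : star (v j) ≠ 0 := star_ne_zero.mpr hj
  rw [Pi.smul_apply, smul_eq_mul, div_mul_eq_mul_div, eq_div_iff hsj]
  linear_combination hij

lemma aux_proj {n : Type*} [Fintype n] (A : Matrix n n ℂ) (hA2 : A * A = A)
    (v : n → ℂ) (hv : v ≠ 0) (c : ℂ) (hc : A *ᵥ v = c • v) :
    A *ᵥ v = 0 ∨ A *ᵥ v = v := by
  have h2 : A *ᵥ (A *ᵥ v) = A *ᵥ v := by
    rw [Matrix.mulVec_mulVec, hA2]
  rw [hc, Matrix.mulVec_smul, hc, smul_smul] at h2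
  have : (c * c - c) • v = 0 := by
    rw [sub_smul, h2, sub_self]
  have hcc : c * c - c = 0 := by
    by_contra hne
    exact hv (by simpa [smul_eq_zero, hne] using this)
  have : c * (c - 1) = 0 := by ring_nf; linear_combination hcc
  rcases mul_eq_zero.mp this with h0 | h1
  · left; rw [hc, h0, zero_smul]
  · right; rw [hc, sub_eq_zero.mp h1, one_smul]

lemma kron_mulVec_vec {d : ℕ} (A B : Matrix (Fin d) (Fin d) ℂ)
    (C : Matrix (Fin d) (Fin d) ℂ) :
    (A ⊗ₖ B) *ᵥ _root_.vec C = _root_.vec (A * C * Bᵀ) := by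
  ext ⟨i, j⟩
  simp only [Matrix.mulVec, dotProduct, _root_.vec, Matrix.kroneckerMap_apply,
    Matrix.mul_apply, Matrix.transpose_apply, Fintype.sum_prod_type]
  rw [Finset.sum_comm]
  congr 1; ext l
  rw [Finset.sum_mul]
  congr 1; ext k
  ring

lemma vec_injective {d : ℕ} : Function.Injective (vec (m := d) (n := d)) := by
  intro A B h
  ext i j
  exact congrFun h (i, j)

/-- For invertible `Γ`, the whole-system property `vec(Γ)·vec(Γ)ᴴ` is incompatible
with every nontrivial property of a single part: `1 ⊗ Q` (for nontrivial `Q`) and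
`P ⊗ 1` (for nontrivial `P`) do not commute with `vec(Γ)·vec(Γ)ᴴ`. -/
theorem holism_single_part (d : ℕ) (Γ : Matrix (Fin d) (Fin d) ℂ) (hΓ : IsUnit Γ) :
    (∀ Q : Matrix (Fin d) (Fin d) ℂ, Qᴴ = Q → Q * Q = Q → Q ≠ 0 → Q ≠ 1 →
      ¬ Commute ((1 : Matrix (Fin d) (Fin d) ℂ) ⊗ₖ Q)
        (vecMulVec (_root_.vec Γ) (star (_root_.vec Γ)))) ∧
    (∀ P : Matrix (Fin d) (Fin d) ℂ, Pᴴ = P → P * P = P → P ≠ 0 → P ≠ 1 →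
      ¬ Commute (P ⊗ₖ (1 : Matrix (Fin d) (Fin d) ℂ))
        (vecMulVec (_root_.vec Γ) (star (_root_.vec Γ)))) := by
  obtain ⟨u, hu⟩ := hΓ
  have hGl : (↑u⁻¹ : Matrix (Fin d) (Fin d) ℂ) * Γ = 1 := by
    rw [← hu]; exact u.inv_mul
  have hGr : Γ * (↑u⁻¹ : Matrix (Fin d) (Fin d) ℂ) = 1 := by
    rw [← hu]; exact u.mul_inv
  -- handle the degenerate case Γ = 0 (forces trivial ring)
  rcases eq_or_ne (_root_.vec Γ) 0 with h0 | hv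
  · have hΓ0 : Γ = 0 := by
      ext i j; exact congrFun h0 (i, j)
    have h10 : (1 : Matrix (Fin d) (Fin d) ℂ) = 0 := by
      rw [← hGl, hΓ0, mul_zero]
    constructor
    · intro Q _ _ hQ0 _ _
      exact hQ0 (by calc Q = Q * 1 := (mul_one Q).symm
                       _ = 0 := by rw [h10, mul_zero])
    · intro P _ _ hP0 _ _
      exact hP0 (by calc P = P * 1 := (mul_one P).symm
                       _ = 0 := by rw [h10, mul_zero])
  constructor
  · intro Q _ hQ2 hQ0 hQ1 hcomm
    obtain ⟨c, hc⟩ := aux_eigen _ _ hv hcomm.eq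
    rcases aux_proj _ (by rw [← Matrix.mul_kronecker_mul, one_mul, hQ2]) _ hv c hc
      with h | h <;> rw [kron_mulVec_vec, one_mul] at h
    · have : Γ * Qᵀ = 0 := vec_injective (h.trans (funext fun _ => rfl))
      have : Qᵀ = 0 := by
        calc Qᵀ = ((↑u⁻¹ : Matrix (Fin d) (Fin d) ℂ) * Γ) * Qᵀ := by rw [hGl, one_mul]
          _ = (↑u⁻¹ : Matrix (Fin d) (Fin d) ℂ) * (Γ * Qᵀ) := by rw [mul_assoc]
          _ = 0 := by rw [this, mul_zero]
      exact hQ0 (by simpa using congrArg Matrix.transpose this)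
    · have : Γ * Qᵀ = Γ := vec_injective h
      have : Qᵀ = 1 := by
        calc Qᵀ = ((↑u⁻¹ : Matrix (Fin d) (Fin d) ℂ) * Γ) * Qᵀ := by rw [hGl, one_mul]
          _ = (↑u⁻¹ : Matrix (Fin d) (Fin d) ℂ) * (Γ * Qᵀ) := by rw [mul_assoc]
          _ = 1 := by rw [this, hGl]
      exact hQ1 (by simpa using congrArg Matrix.transpose this)
  · intro P _ hP2 hP0 hP1 hcomm
    obtain ⟨c, hc⟩ := aux_eigen _ _ hv hcomm.eq
    rcases aux_proj _ (by rw [← Matrix.mul_kronecker_mul, one_mul, hP2]) _ hv c hc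
      with h | h <;> rw [kron_mulVec_vec, Matrix.transpose_one, mul_one] at h
    · have hP : P * Γ = 0 := vec_injective (h.trans (funext fun _ => rfl))
      refine hP0 ?_
      calc P = P * (Γ * (↑u⁻¹ : Matrix (Fin d) (Fin d) ℂ)) := by rw [hGr, mul_one]
        _ = (P * Γ) * (↑u⁻¹ : Matrix (Fin d) (Fin d) ℂ) := by rw [mul_assoc]
        _ = 0 := by rw [hP, zero_mul]
    · have hP : P * Γ = Γ := vec_injective h
      refine hP1 ?_
      calc P = P * (Γ * (↑u⁻¹ : Matrix (Fin d) (Fin d) ℂ)) := by rw [hGr, mul_one]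
        _ = (P * Γ) * (↑u⁻¹ : Matrix (Fin d) (Fin d) ℂ) := by rw [mul_assoc]
        _ = 1 := by rw [hP, hGr]
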